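/- Let G be a P₆-free graph with efficient dominating set D and an induced C_k (k ≥ 5) in G² with real vertices v₁,...,v_k and auxiliary vertices x_i. If v_i ∈ D, then v_i is of type 2, i.e., v_i is adjacent in G to v_{i−1} or to v_{i+1}. -/

import Mathlib

open SimpleGraph Finset

variable {V : Type*}

/-- The square of a graph `G`: two distinct vertices are adjacent iff
their distance in `G` is 1 or 2. -/
def square (G : SimpleGraph V) : SimpleGraph V where
  Adj u v := u ≠ v ∧ (G.Adj u v ∨ ∃ w, G.Adj u w ∧ G.Adj w v)
  symm := by
    refine ⟨?_⟩
    rintro u v ⟨h, h2 | ⟨w, hw1, hw2⟩⟩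
    · exact ⟨h.symm, Or.inl h2.symm⟩
    · exact ⟨h.symm, Or.inr ⟨w, hw2.symm, hw1.symm⟩⟩
  loopless := by refine ⟨?_⟩; rintro u ⟨h, _⟩; exact h rfl

/-- `D` is an efficient dominating set of `G`: every vertex is dominated
(by closed neighborhoods) by exactly one vertex of `D`. -/
def IsEDS (G : SimpleGraph V) (D : Set V) : Prop :=
  ∀ v : V, ∃! d : V, d ∈ D ∧ (d = v ∨ G.Adj d v)

/-- `G` has no induced subgraph isomorphic to `H`. -/
def Free {W : Type*} (G : SimpleGraph V) (H : SimpleGraph W) : Prop :=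
  IsEmpty (H ↪g G)

/-- The house: the complement of the path on five vertices. -/
def house : SimpleGraph (Fin 5) := (pathGraph 5)ᶜ

/-- The domino: a `P₅` `x₁ … x₅` together with a vertex adjacent to `x₁, x₃, x₅`. -/
def domino : SimpleGraph (Fin 6) :=
  SimpleGraph.fromRel (fun i j =>
    (i, j) ∈ [((0 : Fin 6), (1 : Fin 6)), (1, 2), (2, 3), (3, 4), (5, 0), (5, 2), (5, 4)])

/-- A graph is hole-free if it contains no induced cycle `C_k`, `k ≥ 5`. -/
def HoleFree (G : SimpleGraph V) : Prop := ∀ k, 5 ≤ k → _root_.Free G (cycleGraph k)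

/-- A graph is chordal if it contains no induced cycle `C_k`, `k ≥ 4`. -/
def Chordal (G : SimpleGraph V) : Prop := ∀ k, 4 ≤ k → _root_.Free G (cycleGraph k)

lemma p6_embed (G : SimpleGraph V) (a b c d e f : V)
    (e1 : G.Adj a b) (e2 : G.Adj b c) (e3 : G.Adj c d) (e4 : G.Adj d e) (e5 : G.Adj e f)
    (n1 : ¬G.Adj a c) (n2 : ¬G.Adj a d) (n3 : ¬G.Adj a e) (n4 : ¬G.Adj a f)
    (n5 : ¬G.Adj b d) (n6 : ¬G.Adj b e) (n7 : ¬G.Adj b f)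
    (n8 : ¬G.Adj c e) (n9 : ¬G.Adj c f) (n10 : ¬G.Adj d f)
    (d1 : a ≠ c) (d2 : a ≠ d) (d3 : a ≠ e) (d4 : a ≠ f)
    (d5 : b ≠ d) (d6 : b ≠ e) (d7 : b ≠ f)
    (d8 : c ≠ e) (d9 : c ≠ f) (d10 : d ≠ f) :
    Nonempty (pathGraph 6 ↪g G) := by
  set M : Fin 6 → V := fun i =>
    if i = 0 then a else if i = 1 then b else if i = 2 then c
    else if i = 3 then d else if i = 4 then e else f with hM
  have h0 : M 0 = a := rfl
  have h1 : M 1 = b := rfl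
  have h2 : M 2 = c := rfl
  have h3 : M 3 = d := rfl
  have h4 : M 4 = e := rfl
  have h5 : M 5 = f := rfl
  refine ⟨⟨⟨M, ?_⟩, ?_⟩⟩
  · intro u w h
    fin_cases u <;> fin_cases w <;>
      simp [hM, e1.ne, e2.ne, e3.ne, e1.ne', e2.ne', e3.ne', e4.ne', e5.ne', d1, d2, d3, d4, d5, d6, d7, d8, d9, d10, d1.symm, d2.symm, d5.symm] at h ⊢ <;>
      simp_all [h0, h1, h2, h3, h4, h5, e1.ne, e2.ne, e3.ne, e4.ne, e5.ne,
        e1.ne', e2.ne', e3.ne', e4.ne', e5.ne',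
        d1, d2, d3, d4, d5, d6, d7, d8, d9, d10,
        d1.symm, d2.symm, d3.symm, d4.symm, d5.symm, d6.symm, d7.symm, d8.symm, d9.symm, d10.symm]
  · intro u w
    have n1' : ¬ G.Adj c a := fun h => n1 h.symm
    have n2' : ¬ G.Adj d a := fun h => n2 h.symm
    have n3' : ¬ G.Adj e a := fun h => n3 h.symm
    have n4' : ¬ G.Adj f a := fun h => n4 h.symm
    have n5' : ¬ G.Adj d b := fun h => n5 h.symm
    have n6' : ¬ G.Adj e b := fun h => n6 h.symm
    have n7' : ¬ G.Adj f b := fun h => n7 h.symm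
    have n8' : ¬ G.Adj e c := fun h => n8 h.symm
    have n9' : ¬ G.Adj f c := fun h => n9 h.symm
    have n10' : ¬ G.Adj f d := fun h => n10 h.symm
    change G.Adj (M u) (M w) ↔ (pathGraph 6).Adj u w
    fin_cases u <;> fin_cases w <;>
      simp [h0, h1, h2, h3, h4, h5, pathGraph_adj, e1, e2, e3, e4, e5,
        e1.symm, e2.symm, e3.symm, e4.symm, e5.symm,
        n1, n2, n3, n4, n5, n6, n7, n8, n9, n10,
        n1', n2', n3', n4', n5', n6', n7', n8', n9', n10', G.irrefl,
        show ((3:Fin 6):ℕ) = 3 from rfl, show ((4:Fin 6):ℕ) = 4 from rfl,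
        show ((5:Fin 6):ℕ) = 5 from rfl]

theorem stmt12 (G : SimpleGraph V) (h6 : _root_.Free G (pathGraph 6))
    (D : Set V) (hED : IsEDS G D)
    (k : ℕ) (hk : 5 ≤ k) (v : ZMod k → V) (hinj : Function.Injective v)
    (hadj : ∀ i : ZMod k, (square G).Adj (v i) (v (i + 1)))
    (hnon : ∀ i j : ZMod k, j ≠ i - 1 → j ≠ i → j ≠ i + 1 → ¬ (square G).Adj (v i) (v j)) :
    ∀ i : ZMod k, v i ∈ D → G.Adj (v i) (v (i - 1)) ∨ G.Adj (v i) (v (i + 1)) := by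
  haveI : NeZero k := ⟨by omega⟩
  -- nonzero small literals in ZMod k
  have hz : ∀ n : ℕ, 0 < n → n < k → ((n : ZMod k) ≠ 0) := by
    intro n hn hnk h
    rw [ZMod.natCast_eq_zero_iff] at h
    have := Nat.le_of_dvd hn h
    omega
  have z1 : (1 : ZMod k) ≠ 0 := by
    have := hz 1 (by norm_num) (by omega); simpa using this
  have z2 : (2 : ZMod k) ≠ 0 := by
    have := hz 2 (by norm_num) (by omega); push_cast at this; exact this
  have z3 : (3 : ZMod k) ≠ 0 := by
    have := hz 3 (by norm_num) (by omega); push_cast at this; exact this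
  intro i hiD
  by_contra hcon
  push_neg at hcon
  obtain ⟨hL, hR⟩ := hcon
  -- index inequalities
  have ne1 : i - 1 ≠ i := fun h => z1 (by linear_combination -h)
  have ne2 : i + 1 ≠ i := fun h => z1 (by linear_combination h)
  have ne3 : i - 1 ≠ i + 1 := fun h => z2 (by linear_combination -h)
  -- v-distinctness
  have vne1 : v (i - 1) ≠ v i := fun h => ne1 (hinj h)
  have vne2 : v i ≠ v (i + 1) := fun h => ne2 (hinj h.symm)
  have vne3 : v (i - 1) ≠ v (i + 1) := fun h => ne3 (hinj h)
  -- the key square-non-adjacency between v (i-1) and v (i+1)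
  have nsq : ¬ (square G).Adj (v (i - 1)) (v (i + 1)) := by
    apply hnon (i - 1) (i + 1)
    · exact fun h => z3 (by linear_combination h)
    · exact fun h => z2 (by linear_combination h)
    · exact fun h => z1 (by linear_combination h)
  have sqW : ∀ w, G.Adj (v (i - 1)) w → G.Adj w (v (i + 1)) → False :=
    fun w h1 h2 => nsq ⟨vne3, Or.inr ⟨w, h1, h2⟩⟩
  have sqA : ¬ G.Adj (v (i - 1)) (v (i + 1)) := fun h => nsq ⟨vne3, Or.inl h⟩
  -- midpoints
  obtain ⟨hne01, hx⟩ := hadj (i - 1)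
  rw [show i - 1 + 1 = i by ring] at hx hne01
  have hx' : ∃ x, G.Adj (v (i-1)) x ∧ G.Adj x (v i) := by
    rcases hx with h | h
    · exact absurd h.symm hL
    · exact h
  obtain ⟨x, hx1, hx2⟩ := hx'
  obtain ⟨hne02, hy⟩ := hadj i
  have hy' : ∃ y, G.Adj (v i) y ∧ G.Adj y (v (i+1)) := by
    rcases hy with h | h
    · exact absurd h hR
    · exact h
  obtain ⟨y, hy1, hy2⟩ := hy'
  -- EDS tools
  have dom : ∀ w, G.Adj (v i) w → ∀ d, d ∈ D → (d = w ∨ G.Adj d w) → d = v i := by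
    intro w hw d hd hdw
    obtain ⟨u, _, huniq⟩ := hED w
    rw [huniq d ⟨hd, hdw⟩, huniq (v i) ⟨hiD, Or.inr hw⟩]
  have Dadj : ∀ d ∈ D, ∀ d' ∈ D, ¬ G.Adj d d' := by
    intro d hd d' hd' h
    obtain ⟨u, _, huniq⟩ := hED d'
    have h1 := huniq d ⟨hd, Or.inr h⟩
    have h2 := huniq d' ⟨hd', Or.inl rfl⟩
    exact G.irrefl (h1.trans h2.symm ▸ h)
  -- the dominator of v (i-1)
  obtain ⟨d, ⟨hdD, hdom⟩, _⟩ := hED (v (i - 1))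
  have hd_ne : d ≠ v (i - 1) := by
    intro h
    subst h
    exact vne1 (dom x hx2.symm (v (i-1)) hdD (Or.inr hx1))
  have hdadj : G.Adj d (v (i - 1)) := hdom.resolve_left hd_ne
  have hd_vi : d ≠ v i := fun h => hL (h ▸ hdadj)
  have hd_nvi : ¬ G.Adj d (v i) := Dadj d hdD (v i) hiD
  have hd_x : ¬ G.Adj d x := fun h => hd_vi (dom x hx2.symm d hdD (Or.inr h))
  have hd_nex : d ≠ x := fun h => hd_vi (dom x hx2.symm d hdD (Or.inl h))
  have hd_y : ¬ G.Adj d y := fun h => hd_vi (dom y hy1 d hdD (Or.inr h))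
  have hd_ney : d ≠ y := fun h => hd_vi (dom y hy1 d hdD (Or.inl h))
  have hd_nv1 : d ≠ v (i + 1) := fun h => sqA (h ▸ hdadj).symm
  have hd_v1 : ¬ G.Adj d (v (i + 1)) := fun h => sqW d hdadj.symm h
  -- x and y are distinct
  have hxney : x ≠ y := fun h => sqW x hx1 (h ▸ hy2)
  -- more non-adjacencies around the path
  have h01 : ¬ G.Adj (v (i-1)) (v i) := fun h => hL h.symm
  have h0y : ¬ G.Adj (v (i-1)) y := fun h => sqW y h hy2
  have h0ney : v (i - 1) ≠ y := fun h => hL (h ▸ hy1 : G.Adj (v i) (v (i-1)))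
  have hx1' : ¬ G.Adj x (v (i+1)) := fun h => sqW x hx1 h
  have hxne1 : x ≠ v (i + 1) := fun h => hR (h ▸ hx2.symm)
  by_cases hxy : G.Adj x y
  · -- second path : d, v(i-1), x, y, v(i+1), d'
    obtain ⟨d', ⟨hd'D, hd'dom⟩, _⟩ := hED (v (i + 1))
    have hd'_ne : d' ≠ v (i + 1) := by
      intro h
      subst h
      exact vne2 (dom y hy1 (v (i+1)) hd'D (Or.inr hy2.symm)).symm
    have hd'adj : G.Adj d' (v (i + 1)) := hd'dom.resolve_left hd'_ne
    have hd'_vi : d' ≠ v i := fun h => hR (h ▸ hd'adj)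
    have hd'_x : ¬ G.Adj d' x := fun h => hd'_vi (dom x hx2.symm d' hd'D (Or.inr h))
    have hd'_nex : d' ≠ x := fun h => hd'_vi (dom x hx2.symm d' hd'D (Or.inl h))
    have hd'_y : ¬ G.Adj d' y := fun h => hd'_vi (dom y hy1 d' hd'D (Or.inr h))
    have hd'_ney : d' ≠ y := fun h => hd'_vi (dom y hy1 d' hd'D (Or.inl h))
    have hd'_nv0 : d' ≠ v (i - 1) := fun h => sqA (h ▸ hd'adj)
    have hd'_v0 : ¬ G.Adj d' (v (i - 1)) := fun h => sqW d' h.symm hd'adj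
    have hdd' : d ≠ d' := fun h => sqW d hdadj.symm (h ▸ hd'adj : G.Adj d (v (i+1)))
    have hdd'n : ¬ G.Adj d d' := Dadj d hdD d' hd'D
    refine (p6_embed G d (v (i-1)) x y (v (i+1)) d' hdadj hx1 hxy hy2 hd'adj.symm
      hd_x hd_y hd_v1 hdd'n h0y (fun h => sqA h) (fun h => hd'_v0 h.symm) hx1'
      (fun h => hd'_x h.symm) (fun h => hd'_y h.symm)
      hd_nex hd_ney hd_nv1 hdd' h0ney vne3 (Ne.symm hd'_nv0) hxne1
      (Ne.symm hd'_nex) (Ne.symm hd'_ney)).elim fun emb => h6.false emb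
  · -- first path : d, v(i-1), x, v i, y, v(i+1)
    refine (p6_embed G d (v (i-1)) x (v i) y (v (i+1)) hdadj hx1 hx2 hy1 hy2
      hd_x hd_nvi hd_y hd_v1 h01 h0y (fun h => sqA h) hxy hx1' hR
      hd_nex hd_vi hd_ney hd_nv1 vne1 h0ney vne3 hxney hxne1 vne2).elim
      fun emb => h6.false emb
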